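/- Let B > 0 and 0 ≤ a₁ ≤ a₂ be real numbers. The function f(d₁, d₂) = B·(a₁·2^((d₁+d₂)/B) + (a₂ − a₁)·2^(d₂/B) − a₂) is convex on ℝ². -/

import Mathlib

/-- exp composed with a linear functional of `ℝ × ℝ` is convex. -/
lemma exp_lin_convex (c₁ c₂ : ℝ) :
    ConvexOn ℝ Set.univ (fun p : ℝ × ℝ => Real.exp (c₁ * p.1 + c₂ * p.2)) := by
  have h := convexOn_exp.comp_affineMap
    ((c₁ • LinearMap.fst ℝ ℝ ℝ + c₂ • LinearMap.snd ℝ ℝ ℝ).toAffineMap)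
  refine h.congr (fun p _ => ?_)
  simp [Function.comp]

/-- the per-group offloading power
`f(d₁,d₂) = B·(a₁·2^((d₁+d₂)/B) + (a₂−a₁)·2^(d₂/B) − a₂)` is convex on ℝ². -/
theorem stmt_2 (B a₁ a₂ : ℝ) (hB : 0 < B) (ha₁ : 0 ≤ a₁) (h12 : a₁ ≤ a₂) :
    ConvexOn ℝ Set.univ
      (fun p : ℝ × ℝ =>
        B * (a₁ * (2 : ℝ) ^ ((p.1 + p.2) / B)
          + (a₂ - a₁) * (2 : ℝ) ^ (p.2 / B) - a₂)) := by
  have h1 : ConvexOn ℝ Set.univ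
      (fun p : ℝ × ℝ => (2 : ℝ) ^ ((p.1 + p.2) / B)) := by
    have h := exp_lin_convex (Real.log 2 / B) (Real.log 2 / B)
    convert h using 2 with p
    rw [Real.rpow_def_of_pos (by norm_num : (0:ℝ) < 2)]
    ring_nf
  have h2 : ConvexOn ℝ Set.univ
      (fun p : ℝ × ℝ => (2 : ℝ) ^ (p.2 / B)) := by
    have h := exp_lin_convex 0 (Real.log 2 / B)
    convert h using 2 with p
    rw [Real.rpow_def_of_pos (by norm_num : (0:ℝ) < 2)]
    ring_nf
  have hsum := ((h1.smul (mul_nonneg hB.le ha₁)).add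
      (h2.smul (mul_nonneg hB.le (sub_nonneg.2 h12)))).add
      (convexOn_const (-(B * a₂)) convex_univ)
  refine hsum.congr (fun p _ => ?_)
  simp only [Pi.add_apply, smul_eq_mul]
  ring
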